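/- arXiv:2109.06821 — 2 statements merged into one kernel-verified Lean document; each statement's English description precedes it below -/
import Mathlib

section
/- Let I = (F_1,…,F_k) be an ideal in K[[x_1,…,x_n]], let μ be an integer with μ > max{|β| : β a vertex of N(I)}, and let J = (G_1,…,G_k) where j^μ G_i = j^μ F_i for all i (the G_i and F_i agree modulo m^{μ+1}). If H_I = H_J (equal Hilbert–Samuel functions), then N(I) = N(J). -/
noncomputable section
open MvPowerSeries

/-- The value of the positive linear form with coefficients `lam` at `β`. -/
def LamVal {n : ℕ} (lam : Fin n → ℕ) (β : Fin n →₀ ℕ) : ℕ := ∑ j, lam j * β j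

/-- The strict total order on `ℕ^n` induced by the positive linear form `lam`:
lexicographic comparison of `(Λ β, β₁, …, βₙ)`. -/
def LamLt {n : ℕ} (lam : Fin n → ℕ) (β γ : Fin n →₀ ℕ) : Prop :=
  LamVal lam β < LamVal lam γ ∨ (LamVal lam β = LamVal lam γ ∧ toLex ⇑β < toLex ⇑γ)

/-- `β` is the initial exponent of `F` w.r.t. the order induced by `lam`. -/
def IsInexp {n : ℕ} {K : Type*} [Field K] (lam : Fin n → ℕ)
    (F : MvPowerSeries (Fin n) K) (β : Fin n →₀ ℕ) : Prop :=
  coeff (R := K) β F ≠ 0 ∧ ∀ γ, coeff (R := K) γ F ≠ 0 → ¬ LamLt lam γ β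

/-- The diagram of initial exponents of an ideal. -/
def Diagram {n : ℕ} {K : Type*} [Field K] (lam : Fin n → ℕ)
    (I : Ideal (MvPowerSeries (Fin n) K)) : Set (Fin n →₀ ℕ) :=
  {β | ∃ F ∈ I, F ≠ 0 ∧ IsInexp lam F β}

/-- The ideal `n_{Λ,μ}` generated by the monomials `x^β` with `Λ(β) ≥ μ`. -/
def NIdeal {n : ℕ} (K : Type*) [Field K] (lam : Fin n → ℕ) (μ : ℕ) :
    Ideal (MvPowerSeries (Fin n) K) :=
  Ideal.span {F | ∃ β : Fin n →₀ ℕ, μ ≤ LamVal lam β ∧ F = monomial (R := K) β 1}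

/-- The maximal ideal `(x_1, …, x_n)` of `K[[x_1,…,x_n]]`. -/
def MaxId {n : ℕ} (K : Type*) [Field K] : Ideal (MvPowerSeries (Fin n) K) :=
  Ideal.span (Set.range (X : Fin n → MvPowerSeries (Fin n) K))

/-- `V` generates `N` under addition of arbitrary elements of `ℕ^n`. -/
def GeneratesDiag {n : ℕ} (V N : Set (Fin n →₀ ℕ)) : Prop :=
  {x | ∃ v ∈ V, ∃ β, x = v + β} = N

/-- `V` is the set of vertices of the diagram `N`. -/
def IsVertices {n : ℕ} (V : Finset (Fin n →₀ ℕ)) (N : Set (Fin n →₀ ℕ)) : Prop :=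
  ↑V ⊆ N ∧ GeneratesDiag ↑V N ∧
    ∀ W : Finset (Fin n →₀ ℕ), ↑W ⊆ N → GeneratesDiag ↑W N → V ⊆ W

/-- The Hilbert–Samuel function of `K[[x]]/I`. -/
def HSF {n : ℕ} {K : Type*} [Field K] (I : Ideal (MvPowerSeries (Fin n) K)) (η : ℕ) : ℕ :=
  Module.finrank K (MvPowerSeries (Fin n) K ⧸ (I + MaxId K ^ (η + 1)))

end

noncomputable section Stmt10Aux
open MvPowerSeries
open scoped Classical
variable {n : ℕ} {K : Type*} [Field K]


def deg {n : ℕ} (β : Fin n →₀ ℕ) : ℕ := ∑ j, β j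

lemma lamval_eq_deg (β : Fin n →₀ ℕ) : LamVal (fun _ => 1) β = deg β := by
  simp [LamVal, deg]

lemma deg_add (β γ : Fin n →₀ ℕ) : deg (β + γ) = deg β + deg γ := by
  simp [deg, Finsupp.add_apply, Finset.sum_add_distrib]

lemma deg_eq_zero {β : Fin n →₀ ℕ} (h : deg β = 0) : β = 0 := by
  ext j
  have := Finset.sum_eq_zero_iff.mp h j (Finset.mem_univ j)
  simpa using this

lemma lamlt_irrefl (β : Fin n →₀ ℕ) : ¬ LamLt (fun _ => 1) β β := by
  rintro (h | ⟨-, h⟩)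
  · omega
  · exact irrefl_of (α := Lex (Fin n → ℕ)) (· < ·) _ h

lemma lamlt_trans {a b c : Fin n →₀ ℕ} (h1 : LamLt (fun _ => 1) a b)
    (h2 : LamLt (fun _ => 1) b c) : LamLt (fun _ => 1) a c := by
  rcases h1 with h1 | ⟨h1, h1'⟩ <;> rcases h2 with h2 | ⟨h2, h2'⟩
  · exact Or.inl (lt_trans h1 h2)
  · exact Or.inl (by omega)
  · exact Or.inl (by omega)
  · exact Or.inr ⟨by omega, trans_of (α := Lex (Fin n → ℕ)) (· < ·) h1' h2'⟩

lemma lamlt_trichotomy {a b : Fin n →₀ ℕ} (h : a ≠ b) :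
    LamLt (fun _ => 1) a b ∨ LamLt (fun _ => 1) b a := by
  rcases lt_trichotomy (LamVal (fun _ => 1) a) (LamVal (fun _ => 1) b) with hv | hv | hv
  · exact Or.inl (Or.inl hv)
  · have hab : toLex ⇑a ≠ toLex ⇑b := fun he =>
      h (DFunLike.coe_injective (by simpa using he))
    have htri := (Pi.trichotomous_lex (r := ((· < ·) : Fin n → Fin n → Prop))
      (s := fun {_} => ((· < ·) : ℕ → ℕ → Prop)) (IsWellFounded.wf)).1 ⇑a ⇑b
    by_cases hl1 : toLex ⇑a < toLex ⇑b
    · exact Or.inl (Or.inr ⟨hv, hl1⟩)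
    by_cases hl2 : toLex ⇑b < toLex ⇑a
    · exact Or.inr (Or.inr ⟨hv.symm, hl2⟩)
    exact absurd (congrArg toLex (htri hl1 hl2)) hab
  · exact Or.inr (Or.inl hv)

lemma deg_le_of_lamlt {a b : Fin n →₀ ℕ} (h : LamLt (fun _ => 1) a b) : deg a ≤ deg b := by
  rcases h with h | ⟨h, _⟩ <;> rw [lamval_eq_deg, lamval_eq_deg] at h <;> omega

lemma finite_deg_le (n d : ℕ) : {β : Fin n →₀ ℕ | deg β ≤ d}.Finite := by
  have hb : ∀ β : {β : Fin n →₀ ℕ // deg β ≤ d}, ∀ j, β.1 j < d + 1 := by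
    intro β j
    exact Nat.lt_succ_of_le (le_trans (Finset.single_le_sum (f := fun j => β.1 j)
      (fun _ _ => Nat.zero_le _) (Finset.mem_univ j)) β.2)
  have : Finite {β : Fin n →₀ ℕ // deg β ≤ d} := by
    refine Finite.of_injective (fun β => (fun j => (⟨β.1 j, hb β j⟩ : Fin (d+1)))) ?_
    intro β γ hβγ
    exact Subtype.ext (Finsupp.ext fun j => congrArg Fin.val (congrFun hβγ j))
  exact Set.finite_coe_iff.mp this

lemma exists_lamlt_min (s : Finset (Fin n →₀ ℕ)) (hne : s.Nonempty) :
    ∃ β ∈ s, ∀ γ ∈ s, ¬ LamLt (fun _ => 1) γ β := by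
  induction hne using Finset.Nonempty.cons_induction with
  | singleton a => exact ⟨a, Finset.mem_singleton_self a, by
      intro γ hγ
      rw [Finset.mem_singleton] at hγ
      subst hγ
      exact lamlt_irrefl _⟩
  | cons a s ha hs ih =>
    obtain ⟨β, hβ, hmin⟩ := ih
    have hne' : a ≠ β := fun h => ha (h ▸ hβ)
    rcases lamlt_trichotomy hne' with hl | hl
    · refine ⟨a, Finset.mem_cons_self a s, fun γ hγ hlt => ?_⟩
      rcases Finset.mem_cons.mp hγ with rfl | hγ
      · exact lamlt_irrefl _ hlt
      · exact hmin γ hγ (lamlt_trans hlt hl)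
    · refine ⟨β, Finset.mem_cons.mpr (Or.inr hβ), fun γ hγ hlt => ?_⟩
      rcases Finset.mem_cons.mp hγ with rfl | hγ
      · exact lamlt_irrefl _ (lamlt_trans hl hlt)
      · exact hmin γ hγ hlt

lemma exists_set_lamlt_min {S : Set (Fin n →₀ ℕ)} (hfin : S.Finite) (hne : S.Nonempty) :
    ∃ β ∈ S, ∀ γ ∈ S, ¬ LamLt (fun _ => 1) γ β := by
  obtain ⟨β, hβ, hmin⟩ := exists_lamlt_min hfin.toFinset (by simpa using hne)
  exact ⟨β, by simpa using hβ, fun γ hγ => hmin γ (by simpa using hγ)⟩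

lemma exists_inexp {F : MvPowerSeries (Fin n) K} (hF : F ≠ 0) :
    ∃ β, IsInexp (fun _ => 1) F β := by
  have hne : {β : Fin n →₀ ℕ | coeff (R := K) β F ≠ 0}.Nonempty := by
    by_contra h
    exact hF (MvPowerSeries.ext fun β => by
      by_contra hc
      exact h ⟨β, hc⟩)
  obtain ⟨d₀, hd₀, hdmin⟩ := wellFounded_lt.has_min
    {d | ∃ β : Fin n →₀ ℕ, coeff (R := K) β F ≠ 0 ∧ deg β = d}
    ⟨deg hne.choose, hne.choose, hne.choose_spec, rfl⟩
  obtain ⟨β₀, hβ₀, hmin⟩ := exists_set_lamlt_min (S := {β | coeff (R := K) β F ≠ 0 ∧ deg β = d₀})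
    ((finite_deg_le n d₀).subset (fun β hβ => le_of_eq hβ.2)) hd₀
  refine ⟨β₀, hβ₀.1, fun γ hγ hlt => ?_⟩
  have hd2 : deg β₀ = d₀ := hβ₀.2
  have hdγ : deg γ ≤ d₀ := hd2 ▸ deg_le_of_lamlt hlt
  have hge : ¬ deg γ < d₀ := hdmin (deg γ) ⟨γ, hγ, rfl⟩
  exact hmin γ ⟨hγ, by omega⟩ hlt

end Stmt10Aux

section Chunk2
open MvPowerSeries
open scoped Classical
variable {n : ℕ} {K : Type*} [Field K]

lemma maxid_constantCoeff {G : MvPowerSeries (Fin n) K} (hG : G ∈ MaxId K) :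
    coeff (R := K) 0 G = 0 := by
  have : MaxId K ≤ RingHom.ker (constantCoeff (σ := Fin n) (R := K)) := by
    rw [MaxId, Ideal.span_le]
    rintro - ⟨i, rfl⟩
    simp [RingHom.mem_ker]
  simpa [RingHom.mem_ker, ← coeff_zero_eq_constantCoeff] using this hG

/-- The ideal of power series all of whose terms have degree `≥ d`. -/
def lowZero (n : ℕ) (K : Type*) [Field K] (d : ℕ) : Ideal (MvPowerSeries (Fin n) K) where
  carrier := {H | ∀ β, deg β < d → coeff (R := K) β H = 0}
  add_mem' := by
    intro a b ha hb β hβ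
    simp [map_add, ha β hβ, hb β hβ]
  zero_mem' := by intro β hβ; simp
  smul_mem' := by
    intro c H hH β hβ
    simp only [smul_eq_mul, coeff_mul]
    apply Finset.sum_eq_zero
    intro p hp
    rw [Finset.HasAntidiagonal.mem_antidiagonal] at hp
    have hdeg : deg p.1 + deg p.2 = deg β := by rw [← deg_add, hp]
    rw [hH p.2 (by omega), mul_zero]

lemma mem_lowZero_iff {d : ℕ} {H : MvPowerSeries (Fin n) K} :
    H ∈ lowZero n K d ↔ ∀ β, deg β < d → coeff (R := K) β H = 0 := Iff.rfl

lemma maxid_pow_le (d : ℕ) : MaxId K ^ d ≤ lowZero n K d := by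
  induction d with
  | zero => intro H _ β hβ; exact absurd hβ (Nat.not_lt_zero _)
  | succ d ih =>
    rw [pow_succ]
    refine Ideal.mul_le.2 fun H hH G hG => ?_
    intro β hβ
    rw [coeff_mul]
    apply Finset.sum_eq_zero
    intro p hp
    rw [Finset.HasAntidiagonal.mem_antidiagonal] at hp
    have hdeg : deg p.1 + deg p.2 = deg β := by rw [← deg_add, hp]
    by_cases h1 : deg p.1 < d
    · rw [ih hH p.1 h1, zero_mul]
    · have h2 : p.2 = 0 := deg_eq_zero (by omega)
      rw [h2, maxid_constantCoeff hG, mul_zero]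

lemma coeff_eq_of_sub_mem {d : ℕ} {A B : MvPowerSeries (Fin n) K}
    (h : A - B ∈ MaxId K ^ d) {β : Fin n →₀ ℕ} (hβ : deg β < d) :
    coeff (R := K) β A = coeff (R := K) β B := by
  have := maxid_pow_le d h β hβ
  rw [map_sub] at this
  exact sub_eq_zero.mp this

/-- Conversely, a series with all terms of degree `≥ d` lies in `MaxId ^ d`. -/
lemma mem_maxid_pow : ∀ (d : ℕ) (H : MvPowerSeries (Fin n) K),
    (∀ β, deg β < d → coeff (R := K) β H = 0) → H ∈ MaxId K ^ d := by
  intro d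
  induction d with
  | zero => intro H _; simp [Ideal.one_eq_top]
  | succ d ih =>
    intro H hH
    -- split H as ∑ i, X i * H i
    set ch : (Fin n →₀ ℕ) → Option (Fin n) := fun β => β.support.min with hch
    have hch_mem : ∀ (β : Fin n →₀ ℕ) (i : Fin n), ch β = some i → β i ≠ 0 := by
      intro β i hi
      have : i ∈ β.support := Finset.mem_of_min hi
      simpa [Finsupp.mem_support_iff] using this
    have hch_ne : ∀ β : Fin n →₀ ℕ, β ≠ 0 → ∃ i, ch β = some i := by
      intro β hβ
      have : β.support.Nonempty := Finsupp.support_nonempty_iff.mpr hβ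
      obtain ⟨i, hi⟩ := this
      exact Finset.min_of_mem hi
    set Hi : Fin n → MvPowerSeries (Fin n) K := fun i =>
      (fun γ => if ch (γ + Finsupp.single i 1) = some i
        then coeff (R := K) (γ + Finsupp.single i 1) H else 0) with hHi
    have hHico : ∀ (i : Fin n) (γ : Fin n →₀ ℕ), coeff (R := K) γ (Hi i) =
        if ch (γ + Finsupp.single i 1) = some i
          then coeff (R := K) (γ + Finsupp.single i 1) H else 0 := fun i γ => rfl
    have hsplit : H = ∑ i, X i * Hi i := by
      apply MvPowerSeries.ext
      intro β
      rw [map_sum]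
      by_cases hβ0 : β = 0
      · subst hβ0
        rw [hH 0 (by simp [deg])]
        symm
        apply Finset.sum_eq_zero
        intro i _
        rw [X, coeff_monomial_mul]
        split_ifs with h
        · exfalso
          have := Finsupp.single_le_iff.mp h
          simp at this
        · rfl
      · obtain ⟨i₀, hi₀⟩ := hch_ne β hβ0
        have hle : Finsupp.single i₀ 1 ≤ β := by
          rw [Finsupp.single_le_iff]
          exact Nat.one_le_iff_ne_zero.mpr (hch_mem β i₀ hi₀)
        have hsub : β - Finsupp.single i₀ 1 + Finsupp.single i₀ 1 = β :=
          tsub_add_cancel_of_le hle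
        rw [Finset.sum_eq_single i₀]
        · rw [X, coeff_monomial_mul, if_pos hle, one_mul, hHico, hsub, if_pos hi₀]
        · intro i _ hne
          rw [X, coeff_monomial_mul]
          split_ifs with h
          · rw [one_mul, hHico]
            rw [tsub_add_cancel_of_le h]
            rw [if_neg (by rw [hi₀]; exact fun hc => hne (Option.some.inj hc).symm)]
          · rfl
        · intro h
          exact absurd (Finset.mem_univ i₀) h
    rw [hsplit]
    apply Ideal.sum_mem
    intro i _
    have hHim : Hi i ∈ MaxId K ^ d := by
      apply ih
      intro γ hγ
      rw [hHico]
      split_ifs with h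
      · apply hH
        rw [deg_add]
        have : deg (Finsupp.single i 1) = 1 := by simp [deg]
        omega
      · rfl
    have hX : (X i : MvPowerSeries (Fin n) K) ∈ MaxId K :=
      Ideal.subset_span ⟨i, rfl⟩
    rw [pow_succ']
    exact Ideal.mul_mem_mul hX hHim

-- cancellation of addition in LamLt
lemma lamlt_add_left_cancel {γ a b : Fin n →₀ ℕ}
    (h : LamLt (fun _ => 1) (γ + a) (γ + b)) : LamLt (fun _ => 1) a b := by
  simp only [LamLt, lamval_eq_deg, deg_add] at h ⊢
  rcases h with h | ⟨h, hl⟩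
  · exact Or.inl (by omega)
  · refine Or.inr ⟨by omega, ?_⟩
    obtain ⟨i, hji, hi⟩ := hl
    refine ⟨i, fun j hj => ?_, ?_⟩
    · have := hji j hj
      simp only [Finsupp.coe_add, Pi.add_apply] at this
      simpa using Nat.add_left_cancel this
    · have : γ i + a i < γ i + b i := by
        simpa [Finsupp.coe_add, Pi.add_apply] using hi
      simpa using this
lemma diagram_add {I : Ideal (MvPowerSeries (Fin n) K)} {β : Fin n →₀ ℕ}
    (hβ : β ∈ Diagram (fun _ => 1) I) (γ : Fin n →₀ ℕ) :
    β + γ ∈ Diagram (fun _ => 1) I := by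
  obtain ⟨F, hFI, hF0, hco, hmin⟩ := hβ
  refine ⟨monomial (R := K) γ 1 * F, Ideal.mul_mem_left _ _ hFI, ?_, ?_, ?_⟩
  · intro h
    have := congrArg (coeff (R := K) (γ + β)) h
    rw [coeff_add_monomial_mul] at this
    simp only [one_mul, map_zero] at this
    exact hco this
  · rw [add_comm β γ, coeff_add_monomial_mul, one_mul]
    exact hco
  · intro δ hδ hlt
    rw [coeff_monomial_mul] at hδ
    split_ifs at hδ with hγδ
    · rw [one_mul] at hδ
      have hδeq : γ + (δ - γ) = δ := by rw [add_comm]; exact tsub_add_cancel_of_le hγδ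
      rw [← hδeq, add_comm β γ] at hlt
      exact hmin (δ - γ) hδ (lamlt_add_left_cancel hlt)
    · exact hδ rfl

end Chunk2

noncomputable section Chunk3
open MvPowerSeries
open scoped Classical
variable {n : ℕ} {K : Type*} [Field K]

def Tfin (n η : ℕ) : Finset (Fin n →₀ ℕ) := (finite_deg_le n η).toFinset

lemma mem_Tfin {η : ℕ} {β : Fin n →₀ ℕ} : β ∈ Tfin n η ↔ deg β ≤ η := by
  simp [Tfin]

def Bfin (I : Ideal (MvPowerSeries (Fin n) K)) (η : ℕ) : Finset (Fin n →₀ ℕ) :=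
  (Tfin n η).filter (fun β => β ∉ Diagram (fun _ => 1) I)

lemma mem_Bfin {I : Ideal (MvPowerSeries (Fin n) K)} {η : ℕ} {β : Fin n →₀ ℕ} :
    β ∈ Bfin I η ↔ deg β ≤ η ∧ β ∉ Diagram (fun _ => 1) I := by
  simp [Bfin, mem_Tfin]

lemma coeff_msum (s : Finset (Fin n →₀ ℕ)) (g : (Fin n →₀ ℕ) → K) (γ : Fin n →₀ ℕ) :
    coeff (R := K) γ (∑ β ∈ s, g β • monomial (R := K) β 1) = if γ ∈ s then g γ else 0 := by
  rw [map_sum]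
  have : ∀ β ∈ s, coeff (R := K) γ (g β • monomial (R := K) β 1) = if β = γ then g β else 0 := by
    intro β _
    rw [LinearMap.map_smul, coeff_monomial]
    by_cases h : γ = β
    · subst h; simp
    · rw [if_neg h, if_neg (fun hc => h hc.symm)]
      simp
  rw [Finset.sum_congr rfl this, Finset.sum_ite_eq' s γ g]

variable (I : Ideal (MvPowerSeries (Fin n) K)) (η : ℕ)

def Jq : Ideal (MvPowerSeries (Fin n) K) := I + MaxId K ^ (η + 1)

def bfun : {β // β ∈ Bfin I η} → (MvPowerSeries (Fin n) K ⧸ Jq I η) :=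
  fun β => Ideal.Quotient.mk (Jq I η) (monomial (R := K) β.1 1)

lemma linind : LinearIndependent K (bfun I η) := by
  rw [Fintype.linearIndependent_iff]
  intro g hg i
  set g' : (Fin n →₀ ℕ) → K := fun β => if h : β ∈ Bfin I η then g ⟨β, h⟩ else 0 with hg'
  set P : MvPowerSeries (Fin n) K := ∑ β ∈ Bfin I η, g' β • monomial (R := K) β 1 with hP
  have hPmem : P ∈ Jq I η := by
    rw [← Ideal.Quotient.eq_zero_iff_mem, ← hg]
    rw [hP, ← Finset.sum_coe_sort (Bfin I η) (fun β => g' β • monomial (R := K) β 1)]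
    rw [map_sum]
    apply Finset.sum_congr rfl
    intro j _
    have : g' j.1 = g j := by simp [hg', j.2]
    rw [this]
    rfl
  have hcoeffP : ∀ γ, coeff (R := K) γ P = if γ ∈ Bfin I η then g' γ else 0 := fun γ =>
    coeff_msum _ _ _
  have key : ∀ β ∈ Bfin I η, g' β = 0 := by
    rw [Jq] at hPmem
    rw [Submodule.add_eq_sup] at hPmem
    obtain ⟨y, hy, z, hz, hyz⟩ := Submodule.mem_sup.mp hPmem
    by_cases hy0 : y = 0
    · intro β hβ
      have hzP : P = z := by rw [← hyz, hy0, zero_add]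
      have : coeff (R := K) β P = 0 := by
        rw [hzP]
        exact maxid_pow_le (η+1) hz β (Nat.lt_succ_of_le (mem_Bfin.mp hβ).1)
      rwa [hcoeffP, if_pos hβ] at this
    · obtain ⟨α, hα⟩ := exists_inexp hy0
      have hαD : α ∈ Diagram (fun _ => 1) I := ⟨y, hy, hy0, hα⟩
      by_cases hdα : deg α ≤ η
      · exfalso
        have hz0 : coeff (R := K) α z = 0 := maxid_pow_le (η+1) hz α (Nat.lt_succ_of_le hdα)
        have : coeff (R := K) α P = coeff (R := K) α y := by
          rw [← hyz, map_add, hz0, add_zero]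
        have hPα : coeff (R := K) α P ≠ 0 := by rw [this]; exact hα.1
        have : α ∈ Bfin I η := by
          by_contra hc
          rw [hcoeffP, if_neg hc] at hPα
          exact hPα rfl
        exact (mem_Bfin.mp this).2 hαD
      · intro β hβ
        have hylow : ∀ γ : Fin n →₀ ℕ, deg γ ≤ η → coeff (R := K) γ y = 0 := by
          intro γ hγ
          by_contra hc
          exact hα.2 γ hc (Or.inl (by rw [lamval_eq_deg, lamval_eq_deg]; omega))
        have hz0 : coeff (R := K) β z = 0 := maxid_pow_le (η+1) hz β
          (Nat.lt_succ_of_le (mem_Bfin.mp hβ).1)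
        have : coeff (R := K) β P = 0 := by
          rw [← hyz, map_add, hz0, add_zero, hylow β (mem_Bfin.mp hβ).1]
        rwa [hcoeffP, if_pos hβ] at this
  have h2 : g' i.1 = g i := by simp [hg', i.2]
  rw [← h2]
  exact key i.1 i.2

def badF (F : MvPowerSeries (Fin n) K) : Finset (Fin n →₀ ℕ) :=
  (Tfin n η).filter (fun β => coeff (R := K) β F ≠ 0 ∧ β ∈ Diagram (fun _ => 1) I)

def msr (F : MvPowerSeries (Fin n) K) : Finset (Fin n →₀ ℕ) :=
  (Tfin n η).filter (fun γ => ∃ β ∈ badF I η F, β = γ ∨ LamLt (fun _ => 1) β γ)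

lemma bad_subset_msr (F : MvPowerSeries (Fin n) K) : badF I η F ⊆ msr I η F := by
  intro β hβ
  rw [msr, Finset.mem_filter]
  exact ⟨(Finset.mem_filter.mp hβ).1, β, hβ, Or.inl rfl⟩

lemma span_base (F : MvPowerSeries (Fin n) K) (hbad : badF I η F = ∅) :
    Ideal.Quotient.mk (Jq I η) F ∈ Submodule.span K (Set.range (bfun I η)) := by
  set P : MvPowerSeries (Fin n) K :=
    ∑ β ∈ Bfin I η, (coeff (R := K) β F) • monomial (R := K) β 1 with hP
  have hFP : F - P ∈ MaxId K ^ (η + 1) := by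
    apply mem_maxid_pow
    intro γ hγ
    rw [map_sub, coeff_msum]
    by_cases h : γ ∈ Bfin I η
    · rw [if_pos h, sub_self]
    · rw [if_neg h, sub_zero]
      have hγT : γ ∈ Tfin n η := mem_Tfin.mpr (by omega)
      have hγD : γ ∈ Diagram (fun _ => 1) I := by
        by_contra hc
        exact h (Finset.mem_filter.mpr ⟨hγT, hc⟩)
      by_contra hc
      have : γ ∈ badF I η F := Finset.mem_filter.mpr ⟨hγT, hc, hγD⟩
      rw [hbad] at this
      exact absurd this (Finset.notMem_empty γ)
  have hmk : Ideal.Quotient.mk (Jq I η) F = Ideal.Quotient.mk (Jq I η) P := by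
    rw [Ideal.Quotient.eq]
    rw [Jq, Submodule.add_eq_sup]
    exact Submodule.mem_sup_right hFP
  rw [hmk, hP, map_sum]
  apply Submodule.sum_mem
  intro β hβ
  have : Ideal.Quotient.mk (Jq I η) ((coeff (R := K) β F) • monomial (R := K) β 1) =
      (coeff (R := K) β F) • bfun I η ⟨β, hβ⟩ := rfl
  rw [this]
  exact Submodule.smul_mem _ _ (Submodule.subset_span ⟨⟨β, hβ⟩, rfl⟩)

lemma span_ind : ∀ (N : ℕ) (F : MvPowerSeries (Fin n) K), (msr I η F).card ≤ N →
    Ideal.Quotient.mk (Jq I η) F ∈ Submodule.span K (Set.range (bfun I η)) := by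
  intro N
  induction N with
  | zero =>
    intro F hF
    have hmsr : msr I η F = ∅ := Finset.card_eq_zero.mp (Nat.le_zero.mp hF)
    apply span_base
    rw [← Finset.subset_empty, ← hmsr]
    exact bad_subset_msr I η F
  | succ N ih =>
    intro F hF
    by_cases hbad : badF I η F = ∅
    · exact span_base I η F hbad
    · obtain ⟨β₀, hβ₀, hmin⟩ := exists_lamlt_min (badF I η F)
        (Finset.nonempty_of_ne_empty hbad)
      obtain ⟨hβ₀T, hβ₀F, hβ₀D⟩ : β₀ ∈ Tfin n η ∧ coeff (R := K) β₀ F ≠ 0 ∧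
          β₀ ∈ Diagram (fun _ => 1) I := by
        have := Finset.mem_filter.mp hβ₀
        exact ⟨this.1, this.2.1, this.2.2⟩
      obtain ⟨H, hHI, hH0, hHco, hHmin⟩ := hβ₀D
      set q : K := coeff (R := K) β₀ F * (coeff (R := K) β₀ H)⁻¹ with hq
      set F' : MvPowerSeries (Fin n) K := F - C (σ := Fin n) (R := K) q * H with hF'
      have hmkeq : Ideal.Quotient.mk (Jq I η) F = Ideal.Quotient.mk (Jq I η) F' := by
        rw [Ideal.Quotient.eq]
        have : F - F' = C (σ := Fin n) (R := K) q * H := by rw [hF']; ring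
        rw [this, Jq, Submodule.add_eq_sup]
        exact Submodule.mem_sup_left (Ideal.mul_mem_left _ _ hHI)
      have hcoF' : ∀ β, coeff (R := K) β F' = coeff (R := K) β F - q * coeff (R := K) β H := by
        intro β
        rw [hF', map_sub, coeff_C_mul]
      have key : ∀ β ∈ badF I η F', LamLt (fun _ => 1) β₀ β := by
        intro β hβ
        obtain ⟨hβT, hβF', hβD⟩ : β ∈ Tfin n η ∧ coeff (R := K) β F' ≠ 0 ∧
            β ∈ Diagram (fun _ => 1) I := by
          have := Finset.mem_filter.mp hβ
          exact ⟨this.1, this.2.1, this.2.2⟩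
        by_cases heq : β = β₀
        · exfalso
          subst heq
          rw [hcoF', hq, mul_assoc, inv_mul_cancel₀ hHco, mul_one, sub_self] at hβF'
          exact hβF' rfl
        · rcases lamlt_trichotomy heq with hl | hl
          · exfalso
            have hH0' : coeff (R := K) β H = 0 := by
              by_contra hc
              exact hHmin β hc hl
            have hF0' : coeff (R := K) β F = 0 := by
              by_contra hc
              exact hmin β (Finset.mem_filter.mpr ⟨hβT, hc, hβD⟩) hl
            rw [hcoF', hH0', hF0', mul_zero, sub_zero] at hβF'
            exact hβF' rfl
          · exact hl
      have hsub : msr I η F' ⊆ (msr I η F).erase β₀ := by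
        intro γ hγ
        obtain ⟨hγT, β, hβbad, hβγ⟩ : γ ∈ Tfin n η ∧ ∃ β ∈ badF I η F',
            β = γ ∨ LamLt (fun _ => 1) β γ := by
          have := Finset.mem_filter.mp hγ
          exact ⟨this.1, this.2⟩
        have hltγ : LamLt (fun _ => 1) β₀ γ := by
          rcases hβγ with rfl | hl
          · exact key _ hβbad
          · exact lamlt_trans (key _ hβbad) hl
        rw [Finset.mem_erase]
        refine ⟨fun hc => lamlt_irrefl β₀ (hc ▸ hltγ), ?_⟩
        rw [msr, Finset.mem_filter]
        exact ⟨hγT, β₀, hβ₀, Or.inr hltγ⟩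
      have hβ₀msr : β₀ ∈ msr I η F := bad_subset_msr I η F hβ₀
      have hcard : (msr I η F').card ≤ N := by
        have h1 := Finset.card_le_card hsub
        have h2 := Finset.card_erase_of_mem hβ₀msr
        have h3 := Finset.card_pos.mpr ⟨β₀, hβ₀msr⟩
        omega
      rw [hmkeq]
      exact ih F' hcard

lemma span_top : ⊤ ≤ Submodule.span K (Set.range (bfun I η)) := by
  intro x _
  obtain ⟨F, rfl⟩ := Ideal.Quotient.mk_surjective x
  exact span_ind I η (msr I η F).card F le_rfl

theorem hsf_card (I : Ideal (MvPowerSeries (Fin n) K)) (η : ℕ) :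
    Module.finrank K (MvPowerSeries (Fin n) K ⧸ (I + MaxId K ^ (η + 1))) = (Bfin I η).card := by
  have b : Module.Basis {β // β ∈ Bfin I η} K
      (MvPowerSeries (Fin n) K ⧸ Jq I η) := Module.Basis.mk (linind I η) (span_top I η)
  have : Module.finrank K (MvPowerSeries (Fin n) K ⧸ Jq I η) = (Bfin I η).card := by
    rw [Module.finrank_eq_card_basis b, Fintype.card_coe]
  exact this

end Chunk3


open MvPowerSeries in
/-- If `μ` exceeds the maximal total degree of a vertex of `N(I)`, the generators
of `J` agree with those of `I` modulo `m^{μ+1}`, and `H_I = H_J`, then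
`N(I) = N(J)`. -/
theorem stmt10 {n : ℕ} {K : Type*} [Field K]
    (k : ℕ) (F G : Fin k → MvPowerSeries (Fin n) K)
    (V : Finset (Fin n →₀ ℕ))
    (hV : IsVertices V (Diagram (fun _ => 1) (Ideal.span (Set.range F))))
    (μ : ℕ) (hμ : ∀ β ∈ V, (∑ j, β j) < μ)
    (hFG : ∀ i, G i - F i ∈ MaxId (n := n) K ^ (μ + 1))
    (hHS : ∀ η : ℕ, HSF (Ideal.span (Set.range F)) η = HSF (Ideal.span (Set.range G)) η) :
    Diagram (fun _ => 1) (Ideal.span (Set.range F)) =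
      Diagram (fun _ => 1) (Ideal.span (Set.range G)) := by
  classical
  set I := Ideal.span (Set.range F) with hI
  set J := Ideal.span (Set.range G) with hJ
  -- Step 1: N(I) ⊆ N(J)
  have hIJ : Diagram (fun _ => 1) I ⊆ Diagram (fun _ => 1) J := by
    intro x hx
    have hgen := hV.2.1
    rw [GeneratesDiag] at hgen
    rw [← hgen] at hx
    obtain ⟨v, hvV, β, rfl⟩ := hx
    have hvD : v ∈ Diagram (fun _ => 1) I := hV.1 hvV
    have hvdeg : deg v < μ := hμ v hvV
    obtain ⟨H, hHI, hH0, hHco, hHmin⟩ := hvD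
    obtain ⟨a, ha⟩ := (Submodule.mem_span_range_iff_exists_fun _).mp hHI
    simp only [smul_eq_mul] at ha
    set H' : MvPowerSeries (Fin n) K := ∑ i, a i * G i with hH'
    have hH'J : H' ∈ J := Ideal.sum_mem _ fun i _ => Ideal.mul_mem_left _ _
      (Ideal.subset_span ⟨i, rfl⟩)
    have hdiff : H' - H ∈ MaxId K ^ (μ + 1) := by
      rw [← ha, hH', ← Finset.sum_sub_distrib]
      apply Ideal.sum_mem
      intro i _
      rw [← mul_sub]
      exact Ideal.mul_mem_left _ _ (hFG i)
    have hco' : ∀ γ : Fin n →₀ ℕ, deg γ < μ + 1 → coeff (R := K) γ H' = coeff (R := K) γ H :=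
      fun γ hγ => coeff_eq_of_sub_mem hdiff hγ
    have hvco : coeff (R := K) v H' ≠ 0 := by
      rw [hco' v (by omega)]
      exact hHco
    have hvJ : v ∈ Diagram (fun _ => 1) J := by
      refine ⟨H', hH'J, fun h0 => hvco (by rw [h0, map_zero]), hvco, ?_⟩
      intro γ hγ hlt
      have hdγ : deg γ ≤ deg v := by
        have := deg_le_of_lamlt hlt
        omega
      rw [hco' γ (by omega)] at hγ
      exact hHmin γ hγ hlt
    exact diagram_add hvJ β
  -- Step 2: equal Hilbert–Samuel functions force equality of diagrams
  have hcard : ∀ η : ℕ, (Bfin I η).card = (Bfin J η).card := by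
    intro η
    have h1 : HSF I η = (Bfin I η).card := hsf_card I η
    have h2 : HSF J η = (Bfin J η).card := hsf_card J η
    rw [← h1, ← h2]
    exact hHS η
  have hBeq : ∀ η : ℕ, Bfin J η = Bfin I η := by
    intro η
    apply Finset.eq_of_subset_of_card_le
    · intro β hβ
      rw [mem_Bfin] at hβ ⊢
      exact ⟨hβ.1, fun hc => hβ.2 (hIJ hc)⟩
    · exact le_of_eq (hcard η)
  apply Set.Subset.antisymm hIJ
  intro β hβ
  by_contra hc
  have hmem : β ∈ Bfin I (deg β) := mem_Bfin.mpr ⟨le_rfl, hc⟩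
  rw [← hBeq] at hmem
  exact (mem_Bfin.mp hmem).2 hβ
end

section
/- Let I = (F_1,…,F_k) and J = (G_1,…,G_k) be ideals in ℂ[[x_1,…,x_n]] with j^μ G_i = j^μ F_i for all i, where μ > max{|β| : β a vertex of N(I)}. If N(I) = N(J), then the ideals of initial forms coincide: in*(I) = in*(J). -/
noncomputable section
open MvPowerSeries

/-- `P` is the initial form of `F`: the nonzero homogeneous part of `F` of
lowest total degree. -/
def IsInitialForm {n : ℕ} (F P : MvPowerSeries (Fin n) ℂ) : Prop :=
  P ≠ 0 ∧ ∃ d : ℕ,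
    (∀ β : Fin n →₀ ℕ, (∑ j, β j) = d → coeff (R := ℂ) β P = coeff (R := ℂ) β F) ∧
    (∀ β : Fin n →₀ ℕ, (∑ j, β j) ≠ d → coeff (R := ℂ) β P = 0) ∧
    (∀ β : Fin n →₀ ℕ, (∑ j, β j) < d → coeff (R := ℂ) β F = 0)

/-- The ideal of initial forms of an ideal `I ⊆ ℂ[[x]]`. -/
def InIdeal {n : ℕ} (I : Ideal (MvPowerSeries (Fin n) ℂ)) :
    Ideal (MvPowerSeries (Fin n) ℂ) :=
  Ideal.span {P | ∃ F ∈ I, F ≠ 0 ∧ IsInitialForm F P}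

end

namespace Stmt13Aux
noncomputable section
open MvPowerSeries

variable {n : ℕ}

abbrev Deg {n : ℕ} (β : Fin n →₀ ℕ) : ℕ := ∑ j, β j

lemma lamVal_one (β : Fin n →₀ ℕ) : LamVal (fun _ => 1) β = Deg β := by
  simp [LamVal, Deg]

lemma deg_add (β γ : Fin n →₀ ℕ) : Deg (β + γ) = Deg β + Deg γ := by
  simp [Deg, Finsupp.add_apply, Finset.sum_add_distrib]

/-- The ideal of series all of whose coefficients below total degree `m` vanish. -/
def VanIdeal (n m : ℕ) : Ideal (MvPowerSeries (Fin n) ℂ) where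
  carrier := {H | ∀ γ : Fin n →₀ ℕ, Deg γ < m → coeff (R := ℂ) γ H = 0}
  add_mem' := fun ha hb γ hγ => by rw [map_add, ha γ hγ, hb γ hγ, add_zero]
  zero_mem' := fun γ _ => map_zero _
  smul_mem' := fun c H hH γ hγ => by
    classical
    rw [smul_eq_mul, coeff_mul]
    apply Finset.sum_eq_zero
    rintro ⟨a, b⟩ hab
    rw [Finset.HasAntidiagonal.mem_antidiagonal] at hab
    have h1 : Deg a + Deg b = Deg γ := by rw [← deg_add, hab]
    have : Deg b < m := by omega
    rw [hH b this, mul_zero]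

lemma mem_vanIdeal {H : MvPowerSeries (Fin n) ℂ} {m : ℕ} :
    H ∈ VanIdeal n m ↔ ∀ γ : Fin n →₀ ℕ, Deg γ < m → coeff (R := ℂ) γ H = 0 := Iff.rfl

lemma maxId_le_van : MaxId (n := n) ℂ ≤ VanIdeal n 1 := by
  rw [MaxId, Ideal.span_le]
  rintro _ ⟨i, rfl⟩
  rw [SetLike.mem_coe, mem_vanIdeal]
  intro γ hγ
  have hγ0 : γ = 0 := by
    ext j
    have h1 : γ j ≤ Deg γ := Finset.single_le_sum (f := fun i => γ i)
      (fun i _ => Nat.zero_le _) (Finset.mem_univ j)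
    simp only [Finsupp.coe_zero, Pi.zero_apply]
    omega
  rw [hγ0]
  exact coeff_zero_X i

lemma van_mul_le (a b : ℕ) : VanIdeal n a * VanIdeal n b ≤ VanIdeal n (a + b) := by
  rw [Ideal.mul_le]
  intro f hf h hh
  rw [mem_vanIdeal]
  intro γ hγ
  classical
  rw [coeff_mul]
  apply Finset.sum_eq_zero
  rintro ⟨p, q⟩ hpq
  rw [Finset.HasAntidiagonal.mem_antidiagonal] at hpq
  have hd : Deg p + Deg q = Deg γ := by rw [← deg_add, hpq]
  rcases lt_or_ge (Deg p) a with h1 | h1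
  · rw [hf p h1, zero_mul]
  · rw [hh q (by omega), mul_zero]

lemma coeff_eq_zero_of_mem_pow {H : MvPowerSeries (Fin n) ℂ} {m : ℕ}
    (hH : H ∈ MaxId (n := n) ℂ ^ m) {γ : Fin n →₀ ℕ} (hγ : Deg γ < m) :
    coeff (R := ℂ) γ H = 0 := by
  revert hγ
  suffices hle : MaxId (n := n) ℂ ^ m ≤ VanIdeal n m from fun hγ => hle hH γ hγ
  clear hH
  induction m with
  | zero => intro H _ γ hγ; exact absurd hγ (Nat.not_lt_zero _)
  | succ m ih =>
    rw [pow_succ]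
    exact le_trans (Ideal.mul_mono ih maxId_le_van) (van_mul_le m 1)

/-- The finite set of exponents of total degree `d`. -/
def slice (n d : ℕ) : Finset (Fin n →₀ ℕ) :=
  (Finset.Iic (Finsupp.equivFunOnFinite.symm fun _ => d)).filter fun γ => Deg γ = d

lemma mem_slice {d : ℕ} {γ : Fin n →₀ ℕ} : γ ∈ slice n d ↔ Deg γ = d := by
  constructor
  · exact fun h => (Finset.mem_filter.1 h).2
  · intro h
    refine Finset.mem_filter.2 ⟨Finset.mem_Iic.2 ?_, h⟩
    rw [Finsupp.le_def]
    intro j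
    have h1 : γ j ≤ Deg γ := Finset.single_le_sum (f := fun i => γ i)
      (fun i _ => Nat.zero_le _) (Finset.mem_univ j)
    simp only [Finsupp.coe_equivFunOnFinite_symm]
    omega

/-- The homogeneous part of `F` in total degree `d`. -/
def hpart {n : ℕ} (d : ℕ) (F : MvPowerSeries (Fin n) ℂ) : MvPowerSeries (Fin n) ℂ :=
  ∑ β ∈ slice n d, monomial (R := ℂ) β (coeff (R := ℂ) β F)

lemma coeff_hpart (d : ℕ) (F : MvPowerSeries (Fin n) ℂ) (γ : Fin n →₀ ℕ) :
    coeff (R := ℂ) γ (hpart d F) = if Deg γ = d then coeff (R := ℂ) γ F else 0 := by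
  classical
  rw [hpart, map_sum]
  rw [Finset.sum_congr rfl fun β _ => coeff_monomial γ β _]
  rw [Finset.sum_ite_eq (slice n d) γ (fun β => coeff (R := ℂ) β F)]
  congr 1
  simp [mem_slice]

lemma inexp_low {F : MvPowerSeries (Fin n) ℂ} {v u : Fin n →₀ ℕ}
    (hv : IsInexp (fun _ => 1) F v) (hu : Deg u < Deg v) : coeff (R := ℂ) u F = 0 := by
  by_contra h
  exact hv.2 u h (Or.inl (by rw [lamVal_one, lamVal_one]; exact hu))

lemma isInitialForm_hpart {F : MvPowerSeries (Fin n) ℂ} {v : Fin n →₀ ℕ}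
    (hv : IsInexp (fun _ => 1) F v) : IsInitialForm F (hpart (Deg v) F) := by
  refine ⟨?_, Deg v, fun β hβ => by rw [coeff_hpart, if_pos hβ],
    fun β hβ => by rw [coeff_hpart, if_neg hβ], fun β hβ => inexp_low hv hβ⟩
  intro h
  apply hv.1
  have h2 := coeff_hpart (Deg v) F v
  rw [h, map_zero, if_pos rfl] at h2
  exact h2.symm

lemma transfer {F G P : MvPowerSeries (Fin n) ℂ} {μ : ℕ}
    (hFP : IsInitialForm F P) {β0 : Fin n →₀ ℕ} (h0 : coeff (R := ℂ) β0 P ≠ 0)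
    (hd : Deg β0 < μ) (hFG : F - G ∈ MaxId (n := n) ℂ ^ (μ + 1)) :
    IsInitialForm G P ∧ G ≠ 0 := by
  obtain ⟨hP0, d, hc1, hc2, hc3⟩ := hFP
  have hdd : Deg β0 = d := by by_contra h; exact h0 (hc2 _ h)
  have hcoeff : ∀ γ : Fin n →₀ ℕ, Deg γ ≤ d → coeff (R := ℂ) γ G = coeff (R := ℂ) γ F := by
    intro γ hγ
    have h1 := coeff_eq_zero_of_mem_pow hFG (γ := γ) (by omega)
    rw [map_sub, sub_eq_zero] at h1
    exact h1.symm
  have hG0 : coeff (R := ℂ) β0 G ≠ 0 := by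
    rw [hcoeff β0 (le_of_eq hdd), ← hc1 β0 hdd]
    exact h0
  refine ⟨⟨hP0, d, fun β hβ => (hc1 β hβ).trans (hcoeff β hβ.le).symm, hc2,
    fun β hβ => (hcoeff β hβ.le).trans (hc3 β hβ)⟩, fun h => hG0 (by rw [h, map_zero])⟩

lemma lex_add_left {γ a b : Fin n →₀ ℕ} (h : toLex ⇑(γ + a) < toLex ⇑(γ + b)) :
    toLex ⇑a < toLex ⇑b := by
  have h' : Pi.Lex (· < ·) (· < ·) ⇑(γ + a) ⇑(γ + b) := h
  obtain ⟨i, hji, hi⟩ := h'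
  refine (⟨i, fun j hj => ?_, ?_⟩ : Pi.Lex (· < ·) (· < ·) ⇑a ⇑b)
  · have h2 := hji j hj
    show a j = b j
    have h3 : γ j + a j = γ j + b j := by simpa [Finsupp.add_apply] using h2
    omega
  · show a i < b i
    have h3 : γ i + a i < γ i + b i := by simpa [Finsupp.add_apply] using hi
    omega

lemma exists_lead {F P : MvPowerSeries (Fin n) ℂ} (hFP : IsInitialForm F P) :
    ∃ β, coeff (R := ℂ) β P ≠ 0 ∧ ∀ γ, coeff (R := ℂ) γ P ≠ 0 → ¬ (toLex ⇑γ < toLex ⇑β) := by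
  classical
  obtain ⟨hP0, d, hc1, hc2, hc3⟩ := hFP
  have hex : ∃ β0, coeff (R := ℂ) β0 P ≠ 0 := by
    by_contra h
    push_neg at h
    exact hP0 (MvPowerSeries.ext fun β => by rw [h β, map_zero])
  obtain ⟨β0, hβ0⟩ := hex
  have hmemT : ∀ γ : Fin n →₀ ℕ, coeff (R := ℂ) γ P ≠ 0 →
      toLex ⇑γ ∈ ((slice n d).filter fun γ' => coeff (R := ℂ) γ' P ≠ 0).image
        (fun γ' : Fin n →₀ ℕ => toLex ⇑γ') := by
    intro γ hγ
    exact Finset.mem_image.2 ⟨γ, Finset.mem_filter.2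
      ⟨mem_slice.2 (by by_contra h; exact hγ (hc2 _ h)), hγ⟩, rfl⟩
  obtain ⟨m, hmM⟩ := Finset.exists_minimal ⟨_, hmemT β0 hβ0⟩
  have hm := hmM.prop
  have hmin : ∀ x ∈ _, ¬ x < m := fun x hx => hmM.not_lt hx
  obtain ⟨β, hβT, rfl⟩ := Finset.mem_image.1 hm
  exact ⟨β, (Finset.mem_filter.1 hβT).2, fun γ hγ hlt => hmin (toLex ⇑γ) (hmemT γ hγ) hlt⟩

lemma lead_in_diagram {I : Ideal (MvPowerSeries (Fin n) ℂ)} {F P : MvPowerSeries (Fin n) ℂ}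
    {β : Fin n →₀ ℕ} (hFI : F ∈ I) (hFP : IsInitialForm F P)
    (h1 : coeff (R := ℂ) β P ≠ 0) (h2 : ∀ γ, coeff (R := ℂ) γ P ≠ 0 → ¬ (toLex ⇑γ < toLex ⇑β)) :
    β ∈ Diagram (fun _ => 1) I := by
  obtain ⟨hP0, d, hc1, hc2, hc3⟩ := hFP
  have hβd : Deg β = d := by by_contra h; exact h1 (hc2 _ h)
  have hβF : coeff (R := ℂ) β F ≠ 0 := by rw [← hc1 β hβd]; exact h1
  refine ⟨F, hFI, fun h => hβF (by rw [h, map_zero]), hβF, fun γ hγ hlt => ?_⟩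
  rcases hlt with h | ⟨heq, hlex⟩
  · rw [lamVal_one, lamVal_one, hβd] at h
    exact hγ (hc3 γ h)
  · rw [lamVal_one, lamVal_one, hβd] at heq
    exact h2 γ (by rw [hc1 γ heq]; exact hγ) hlex

end
end Stmt13Aux

namespace Stmt13Aux
noncomputable section
open MvPowerSeries
open scoped Classical

variable {n : ℕ}

lemma trichotomy {a b : Fin n →₀ ℕ} (h1 : ¬ toLex ⇑a < toLex ⇑b) (h2 : a ≠ b) :
    toLex ⇑b < toLex ⇑a := by
  rcases lt_trichotomy (toLex ⇑a) (toLex ⇑b) with h | h | h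
  · exact absurd h h1
  · exact absurd (DFunLike.coe_injective h) h2
  · exact h

lemma main_ind {I J : Ideal (MvPowerSeries (Fin n) ℂ)} {V : Finset (Fin n →₀ ℕ)} {μ : ℕ}
    (hVsub : ↑V ⊆ Diagram (fun _ => 1) I)
    (hVgen : ∀ x ∈ Diagram (fun _ => 1) I, ∃ v ∈ V, ∃ γ0, x = v + γ0)
    (hμ : ∀ β ∈ V, Deg β < μ)
    (hclose : ∀ P ∈ I, ∃ Q ∈ J, P - Q ∈ MaxId (n := n) ℂ ^ (μ + 1)) :
    ∀ (m : ℕ) (F P : MvPowerSeries (Fin n) ℂ) (β : Fin n →₀ ℕ), F ∈ I →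
      IsInitialForm F P → coeff (R := ℂ) β P ≠ 0 →
      (∀ γ, coeff (R := ℂ) γ P ≠ 0 → ¬ (toLex ⇑γ < toLex ⇑β)) →
      ((slice n (Deg β)).filter fun γ : Fin n →₀ ℕ => ¬ (toLex ⇑γ < toLex ⇑β)).card < m →
      P ∈ InIdeal J := by
  intro m
  induction m with
  | zero => intro F P β _ _ _ _ h; exact absurd h (Nat.not_lt_zero _)
  | succ m ih =>
    intro F P β hFI hFP hβ hβmin hcard
    obtain ⟨hP0, d, hc1, hc2, hc3⟩ := hFP
    have hβd : Deg β = d := by by_contra h; exact hβ (hc2 _ h)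
    have hβdiag : β ∈ Diagram (fun _ => 1) I :=
      lead_in_diagram hFI ⟨hP0, d, hc1, hc2, hc3⟩ hβ hβmin
    obtain ⟨v, hvV, γ, hβeq⟩ := hVgen β hβdiag
    subst hβeq
    obtain ⟨Fv, hFvI, hFvne, hFvin⟩ := hVsub hvV
    have hQv : IsInitialForm Fv (hpart (Deg v) Fv) := isInitialForm_hpart hFvin
    set Qv := hpart (Deg v) Fv with hQvdef
    have hq : coeff (R := ℂ) v Qv ≠ 0 := by
      rw [hQvdef, coeff_hpart, if_pos rfl]; exact hFvin.1
    obtain ⟨Gv, hGvJ, hGvsub⟩ := hclose Fv hFvI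
    obtain ⟨hGvQv, hGvne⟩ := transfer hQv hq (hμ v hvV) hGvsub
    have hQvJ : Qv ∈ InIdeal J := Ideal.subset_span ⟨Gv, hGvJ, hGvne, hGvQv⟩
    set q := coeff (R := ℂ) v Qv with hqdef
    set c := coeff (R := ℂ) (v + γ) P / q with hcdef
    set M := monomial (R := ℂ) γ (1 : ℂ) * Qv with hMdef
    have hdsum : Deg v + Deg γ = d := by rw [← deg_add]; exact hβd
    have hcoeffM : ∀ β', coeff (R := ℂ) β' M =
        if γ ≤ β' then coeff (R := ℂ) (β' - γ) Qv else 0 := by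
      intro β'
      rw [hMdef, coeff_monomial_mul]
      split <;> simp
    have hMβ : coeff (R := ℂ) (v + γ) M = q := by
      rw [hcoeffM, if_pos le_add_self, add_tsub_cancel_right]
    have hMslice : ∀ β', coeff (R := ℂ) β' M ≠ 0 → Deg β' = d := by
      intro β' h
      rw [hcoeffM] at h
      by_cases hle : γ ≤ β'
      · rw [if_pos hle] at h
        have h2 : Deg (β' - γ) = Deg v := by
          by_contra hne
          rw [hQvdef, coeff_hpart, if_neg hne] at h
          exact h rfl
        have h3 : γ + (β' - γ) = β' := add_tsub_cancel_of_le hle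
        have h4 : Deg γ + Deg (β' - γ) = Deg β' := by rw [← deg_add, h3]
        omega
      · rw [if_neg hle] at h; exact absurd rfl h
    have hMlow : ∀ β' : Fin n →₀ ℕ, toLex ⇑β' < toLex ⇑(v + γ) → coeff (R := ℂ) β' M = 0 := by
      intro β' hlt
      rw [hcoeffM]
      by_cases hle : γ ≤ β'
      · rw [if_pos hle, hQvdef, coeff_hpart]
        by_cases hdw : Deg (β' - γ) = Deg v
        · rw [if_pos hdw]
          by_contra h
          have h3 : γ + (β' - γ) = β' := add_tsub_cancel_of_le hle
          have hlex : toLex ⇑(β' - γ) < toLex ⇑v := by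
            apply lex_add_left (γ := γ)
            rw [h3, add_comm γ v]
            exact hlt
          exact hFvin.2 (β' - γ) h
            (Or.inr ⟨by rw [lamVal_one, lamVal_one, hdw], hlex⟩)
        · rw [if_neg hdw]
      · rw [if_neg hle]
    set P' := P - C (σ := Fin n) (R := ℂ) c * M with hP'def
    set F' := F - C (σ := Fin n) (R := ℂ) c * (monomial (R := ℂ) γ (1 : ℂ) * Fv) with hF'def
    have hF'I : F' ∈ I := Submodule.sub_mem _ hFI (Ideal.mul_mem_left _ _ (Ideal.mul_mem_left _ _ hFvI))
    have hcoeffP' : ∀ β', coeff (R := ℂ) β' P' = coeff (R := ℂ) β' P - c * coeff (R := ℂ) β' M := by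
      intro β'; rw [hP'def, map_sub, coeff_C_mul]
    have hcq : c * q = coeff (R := ℂ) (v + γ) P := div_mul_cancel₀ _ hq
    have hP'β : coeff (R := ℂ) (v + γ) P' = 0 := by
      rw [hcoeffP', hMβ, hcq, sub_self]
    have hMxF : ∀ β', Deg β' = d →
        coeff (R := ℂ) β' (monomial (R := ℂ) γ (1 : ℂ) * Fv) = coeff (R := ℂ) β' M := by
      intro β' hβ'
      rw [coeff_monomial_mul, hcoeffM]
      by_cases hle : γ ≤ β'
      · rw [if_pos hle, if_pos hle, one_mul, hQvdef, coeff_hpart, if_pos ?_]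
        have h3 : γ + (β' - γ) = β' := add_tsub_cancel_of_le hle
        have h4 : Deg γ + Deg (β' - γ) = d := by rw [← deg_add, h3]; exact hβ'
        omega
      · rw [if_neg hle, if_neg hle]
    have hMJ : C (σ := Fin n) (R := ℂ) c * M ∈ InIdeal J :=
      Ideal.mul_mem_left _ _ (Ideal.mul_mem_left _ _ hQvJ)
    rcases eq_or_ne P' 0 with h0 | h0
    · have hPeq : P = C (σ := Fin n) (R := ℂ) c * M := by
        have := sub_eq_zero.mp h0
        exact this
      rw [hPeq]; exact hMJ
    · have hIF' : IsInitialForm F' P' := by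
        refine ⟨h0, d, ?_, ?_, ?_⟩
        · intro β' hβ'
          rw [hcoeffP', hc1 _ hβ', hF'def, map_sub, coeff_C_mul, hMxF _ hβ']
        · intro β' hβ'
          have h0M : coeff (R := ℂ) β' M = 0 := by
            by_contra hh; exact hβ' (hMslice β' hh)
          rw [hcoeffP', hc2 _ hβ', h0M, mul_zero, sub_zero]
        · intro β' hβ'
          rw [hF'def, map_sub, coeff_C_mul, hc3 _ hβ', coeff_monomial_mul]
          by_cases hle : γ ≤ β'
          · rw [if_pos hle, one_mul]
            have h3 : γ + (β' - γ) = β' := add_tsub_cancel_of_le hle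
            have h4 : Deg γ + Deg (β' - γ) < d := by rw [← deg_add, h3]; exact hβ'
            have h5 : Deg (β' - γ) < Deg v := by omega
            rw [inexp_low hFvin h5, mul_zero, sub_zero]
          · rw [if_neg hle, mul_zero, sub_zero]
      obtain ⟨β', hβ'ne, hβ'min⟩ := exists_lead hIF'
      have hsuppP' : ∀ β'', coeff (R := ℂ) β'' P' ≠ 0 → Deg β'' = d := by
        intro β'' h
        by_contra hne
        have h0M : coeff (R := ℂ) β'' M = 0 := by
          by_contra hh; exact hne (hMslice β'' hh)
        rw [hcoeffP', hc2 _ hne, h0M, mul_zero, sub_zero] at h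
        exact h rfl
      have hβ'd : Deg β' = d := hsuppP' β' hβ'ne
      have hβ'lt : toLex ⇑(v + γ) < toLex ⇑β' := by
        have hne2 : β' ≠ v + γ := by
          intro h; rw [h] at hβ'ne; exact hβ'ne hP'β
        have hnlt : ¬ toLex ⇑β' < toLex ⇑(v + γ) := by
          intro hlt
          have h1 : coeff (R := ℂ) β' P = 0 := by
            by_contra hh; exact hβmin β' hh hlt
          have h2 : coeff (R := ℂ) β' M = 0 := hMlow β' hlt
          rw [hcoeffP', h1, h2, mul_zero, sub_zero] at hβ'ne
          exact hβ'ne rfl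
        exact trichotomy hnlt hne2
      have hdec : ((slice n (Deg β')).filter fun γ' : Fin n →₀ ℕ => ¬ (toLex ⇑γ' < toLex ⇑β')).card <
          ((slice n (Deg (v + γ))).filter fun γ' : Fin n →₀ ℕ => ¬ (toLex ⇑γ' < toLex ⇑(v + γ))).card := by
        rw [hβ'd, hβd]
        apply Finset.card_lt_card
        rw [Finset.ssubset_def]
        constructor
        · intro x hx
          rw [Finset.mem_filter] at hx ⊢
          exact ⟨hx.1, fun hlt => hx.2 (lt_trans (α := Lex (Fin n → ℕ)) hlt hβ'lt)⟩
        · intro hsub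
          have hmem : (v + γ) ∈ (slice n d).filter
              (fun γ' : Fin n →₀ ℕ => ¬ (toLex ⇑γ' < toLex ⇑(v + γ))) :=
            Finset.mem_filter.2 ⟨mem_slice.2 hβd, lt_irrefl _⟩
          have h2 := hsub hmem
          rw [Finset.mem_filter] at h2
          exact h2.2 hβ'lt
      have hP'J : P' ∈ InIdeal J :=
        ih F' P' β' hF'I hIF' hβ'ne hβ'min (lt_of_lt_of_le hdec (Nat.lt_succ_iff.mp hcard))
      have hPeq : P = P' + C (σ := Fin n) (R := ℂ) c * M := by rw [hP'def]; ring
      rw [hPeq]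
      exact Ideal.add_mem _ hP'J hMJ

lemma inideal_le {I J : Ideal (MvPowerSeries (Fin n) ℂ)} {V : Finset (Fin n →₀ ℕ)} {μ : ℕ}
    (hVsub : ↑V ⊆ Diagram (fun _ => 1) I)
    (hVgen : ∀ x ∈ Diagram (fun _ => 1) I, ∃ v ∈ V, ∃ γ0, x = v + γ0)
    (hμ : ∀ β ∈ V, Deg β < μ)
    (hclose : ∀ P ∈ I, ∃ Q ∈ J, P - Q ∈ MaxId (n := n) ℂ ^ (μ + 1)) :
    InIdeal I ≤ InIdeal J := by
  rw [InIdeal, Ideal.span_le]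
  rintro P ⟨F, hFI, hFne, hFP⟩
  obtain ⟨β, hβ, hβmin⟩ := exists_lead hFP
  exact main_ind hVsub hVgen hμ hclose
    (((slice n (Deg β)).filter fun γ : Fin n →₀ ℕ => ¬ (toLex ⇑γ < toLex ⇑β)).card + 1)
    F P β hFI hFP hβ hβmin (Nat.lt_succ_self _)

end
end Stmt13Aux


open MvPowerSeries in
/-- If `I = (F_1,…,F_k)` and `J = (G_1,…,G_k)` in `ℂ[[x]]` with
`j^μ G_i = j^μ F_i` for `μ` exceeding the maximal total degree of a vertex of
`N(I)`, and `N(I) = N(J)`, then `in*(I) = in*(J)`. -/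
theorem stmt13 {n : ℕ} (k : ℕ) (F G : Fin k → MvPowerSeries (Fin n) ℂ)
    (V : Finset (Fin n →₀ ℕ))
    (hV : IsVertices V (Diagram (fun _ => 1) (Ideal.span (Set.range F))))
    (μ : ℕ) (hμ : ∀ β ∈ V, (∑ j, β j) < μ)
    (hFG : ∀ i, G i - F i ∈ MaxId (n := n) ℂ ^ (μ + 1))
    (hND : Diagram (fun _ => 1) (Ideal.span (Set.range F)) =
      Diagram (fun _ => 1) (Ideal.span (Set.range G))) :
    InIdeal (Ideal.span (Set.range F)) = InIdeal (Ideal.span (Set.range G)) := by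
  set I := Ideal.span (Set.range F) with hI
  set J := Ideal.span (Set.range G) with hJ
  have hgen := hV.2.1
  unfold GeneratesDiag at hgen
  have hVgenI : ∀ x ∈ Diagram (fun _ => 1) I, ∃ v ∈ V, ∃ γ0, x = v + γ0 := by
    intro x hx
    rw [← hgen] at hx
    obtain ⟨v, hv, γ0, hγ0⟩ := hx
    exact ⟨v, hv, γ0, hγ0⟩
  have hVgenJ : ∀ x ∈ Diagram (fun _ => 1) J, ∃ v ∈ V, ∃ γ0, x = v + γ0 := by
    rw [← hND]; exact hVgenI
  have hVsubI : ↑V ⊆ Diagram (fun _ => 1) I := hV.1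
  have hVsubJ : ↑V ⊆ Diagram (fun _ => 1) J := hND ▸ hV.1
  have hcloseIJ : ∀ P ∈ I, ∃ Q ∈ J, P - Q ∈ MaxId (n := n) ℂ ^ (μ + 1) := by
    intro P hP
    have hle : I ≤ J ⊔ MaxId (n := n) ℂ ^ (μ + 1) := by
      rw [hI, Ideal.span_le]
      rintro _ ⟨i, rfl⟩
      have h1 : G i ∈ J := Ideal.subset_span ⟨i, rfl⟩
      have h2 : F i - G i ∈ MaxId (n := n) ℂ ^ (μ + 1) := by
        rw [← neg_sub]; exact neg_mem (hFG i)
      have h3 : F i = G i + (F i - G i) := by ring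
      rw [h3]
      exact Submodule.add_mem_sup h1 h2
    have := hle hP
    rw [Submodule.mem_sup] at this
    obtain ⟨Q, hQ, H, hH, hsum⟩ := this
    exact ⟨Q, hQ, by rwa [← hsum, add_sub_cancel_left]⟩
  have hcloseJI : ∀ P ∈ J, ∃ Q ∈ I, P - Q ∈ MaxId (n := n) ℂ ^ (μ + 1) := by
    intro P hP
    have hle : J ≤ I ⊔ MaxId (n := n) ℂ ^ (μ + 1) := by
      rw [hJ, Ideal.span_le]
      rintro _ ⟨i, rfl⟩
      have h1 : F i ∈ I := Ideal.subset_span ⟨i, rfl⟩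
      have h3 : G i = F i + (G i - F i) := by ring
      rw [h3]
      exact Submodule.add_mem_sup h1 (hFG i)
    have := hle hP
    rw [Submodule.mem_sup] at this
    obtain ⟨Q, hQ, H, hH, hsum⟩ := this
    exact ⟨Q, hQ, by rwa [← hsum, add_sub_cancel_left]⟩
  exact le_antisymm (Stmt13Aux.inideal_le hVsubI hVgenI hμ hcloseIJ)
    (Stmt13Aux.inideal_le hVsubJ hVgenJ hμ hcloseJI)
end
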